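/- Let K ⊆ 2^Q for a finite Q, and let R be the set of all implicates of K. Then K(R) is the unique minimal union-closed family (containing ∅) that contains K ∪ {∅}; in particular, if K is union-closed with ∅ ∈ K, then K = K(R). -/
import Mathlib


variable {α : Type*} [DecidableEq α] [Fintype α]

/-- A family of subsets is union-closed. -/
def UnionClosed (K : Set (Finset α)) : Prop :=
  ∀ X ∈ K, ∀ Y ∈ K, X ∪ Y ∈ K

/-- There is a tight path in `K` from `S` to `T`: a chain of members of `K`
each obtained from the previous by adding exactly one element. -/
def TightPath (K : Set (Finset α)) (S T : Finset α) : Prop :=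
  ∃ (k : ℕ) (Y : ℕ → Finset α), Y 0 = S ∧ Y k = T ∧ (∀ i ≤ k, Y i ∈ K) ∧
    ∀ i < k, Y i ⊆ Y (i + 1) ∧ (Y (i + 1) \ Y i).card = 1

/-- The family of members of `K` reachable from `∅` by a tight path in `K`. -/
def checkFam (K : Set (Finset α)) : Set (Finset α) :=
  {X | X ∈ K ∧ TightPath K ∅ X}

/-- Accessibility: every nonempty member can lose some element and stay in the family. -/
def Accessible (K : Set (Finset α)) : Prop :=
  ∀ X ∈ K, X ≠ ∅ → ∃ x ∈ X, X.erase x ∈ K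

/-- An antimatroid: contains `∅`, union-closed, and accessible. -/
def IsAntimatroid (K : Set (Finset α)) : Prop :=
  ∅ ∈ K ∧ UnionClosed K ∧ Accessible K

/-- A Horn rule `(A, q)` accepts `X` if `q ∈ X` implies `X ∩ A ≠ ∅`. -/
def Accepts (r : Finset α × α) (X : Finset α) : Prop :=
  r.2 ∈ X → (X ∩ r.1).Nonempty

/-- The union-closed family determined by a set of Horn rules. -/
def KFam (R : Set (Finset α × α)) : Set (Finset α) :=
  {X | ∀ r ∈ R, Accepts r X}

/-- The maximal antimatroid contained in `KFam R`. -/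
def AFam (R : Set (Finset α × α)) : Set (Finset α) :=
  checkFam (KFam R)

/-- A rule is an implicate of a family if it accepts every member. -/
def Implicate (K : Set (Finset α)) (r : Finset α × α) : Prop :=
  ∀ X ∈ K, Accepts r X
lemma sup_mem_of_uc {M : Set (Finset α)} (h0 : ∅ ∈ M) (huc : UnionClosed M)
    (T : Finset (Finset α)) (hT : ∀ Y ∈ T, Y ∈ M) : T.sup id ∈ M := by
  induction T using Finset.induction_on with
  | empty => simpa using h0
  | @insert a s hx ih =>
    rw [Finset.sup_insert]
    exact huc a (hT a (Finset.mem_insert_self a s)) _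
      (ih fun Y hY => hT Y (Finset.mem_insert_of_mem hY))

theorem stmt18 (K : Set (Finset α)) :
    (∅ ∈ KFam {r : Finset α × α | Implicate K r} ∧
     UnionClosed (KFam {r : Finset α × α | Implicate K r}) ∧
     K ⊆ KFam {r : Finset α × α | Implicate K r} ∧
     ∀ M : Set (Finset α), ∅ ∈ M → UnionClosed M → K ⊆ M →
       KFam {r : Finset α × α | Implicate K r} ⊆ M) ∧
    ((∅ ∈ K ∧ UnionClosed K) → K = KFam {r : Finset α × α | Implicate K r}) := by
  classical
  have hmin : ∀ M : Set (Finset α), ∅ ∈ M → UnionClosed M → K ⊆ M →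
      KFam {r : Finset α × α | Implicate K r} ⊆ M := by
    intro M h0 huc hKM X hX
    set T : Finset (Finset α) :=
      Finset.univ.filter (fun Y => Y ∈ K ∧ Y ⊆ X) with hTdef
    have hXsup : X = T.sup id := by
      apply Finset.Subset.antisymm
      · intro q hq
        by_contra hq'
        have himp : Implicate K (Finset.univ \ X, q) := by
          intro Y hY hqY
          by_contra hempty
          have hYX : Y ⊆ X := by
            intro y hy
            by_contra hyX
            exact hempty ⟨y, Finset.mem_inter.2 ⟨hy,
              Finset.mem_sdiff.2 ⟨Finset.mem_univ y, hyX⟩⟩⟩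
          exact hq' (Finset.mem_sup.2 ⟨Y,
            Finset.mem_filter.2 ⟨Finset.mem_univ Y, hY, hYX⟩, hqY⟩)
        obtain ⟨z, hz⟩ := hX (Finset.univ \ X, q) himp hq
        rw [Finset.mem_inter, Finset.mem_sdiff] at hz
        exact hz.2.2 hz.1
      · intro q hq
        obtain ⟨Y, hY, hqY⟩ := Finset.mem_sup.1 hq
        exact (Finset.mem_filter.1 hY).2.2 hqY
    rw [hXsup]
    exact sup_mem_of_uc h0 huc T fun Y hY => hKM (Finset.mem_filter.1 hY).2.1
  have hKsub : K ⊆ KFam {r : Finset α × α | Implicate K r} :=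
    fun X hX r hr => hr X hX
  refine ⟨⟨fun r _ hr => absurd hr (Finset.notMem_empty _), ?_, hKsub, hmin⟩, ?_⟩
  · intro X hX Y hY r hr hq
    rcases Finset.mem_union.1 hq with h | h
    · obtain ⟨z, hz⟩ := hX r hr h
      rw [Finset.mem_inter] at hz
      exact ⟨z, Finset.mem_inter.2 ⟨Finset.mem_union_left _ hz.1, hz.2⟩⟩
    · obtain ⟨z, hz⟩ := hY r hr h
      rw [Finset.mem_inter] at hz
      exact ⟨z, Finset.mem_inter.2 ⟨Finset.mem_union_right _ hz.1, hz.2⟩⟩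
  · rintro ⟨h0, huc⟩
    exact Set.Subset.antisymm hKsub (hmin K h0 huc (fun _ h => h))
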